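/- Bound for the contour C₂: let σ₀ > 1, T > 0 and 0 < δ < T be real numbers. Assume that for each of the two heights T₊ = T + δ and T₋ = T − δ the following holds: Re(ζ(σ₀ + it)) ≠ 0 for all t ∈ [0, T₊] (respectively [0, T₋]), and ζ(x + iT₊) ≠ 0, Re(ζ(x + iT₊)) ≠ 0, ζ(x + iT₋) ≠ 0, Re(ζ(x + iT₋)) ≠ 0 for all x ∈ [1/2, σ₀]. Then |Im( ∫₀^{T₊} i·ζ′(σ₀+it)/ζ(σ₀+it) dt + ∫_{σ₀}^{1/2} ζ′(x+iT₊)/ζ(x+iT₊) dx ) − Im( ∫₀^{T₋} i·ζ′(σ₀+it)/ζ(σ₀+it) dt + ∫_{σ₀}^{1/2} ζ′(x+iT₋)/ζ(x+iT₋) dx )| < π. -/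

import Mathlib

open Complex intervalIntegral

private lemma aux_pos_on (a b c : ℝ) (f : ℝ → ℝ) (hf : ContinuousOn f (Set.Icc a b))
    (hc : c ∈ Set.Icc a b) (hfc : 0 < f c) (hne : ∀ t ∈ Set.Icc a b, f t ≠ 0) :
    ∀ t ∈ Set.Icc a b, 0 < f t := by
  intro t ht
  rcases lt_or_gt_of_ne (hne t ht) with hlt | h
  · exfalso
    have hsub : Set.uIcc t c ⊆ Set.Icc a b := Set.uIcc_subset_Icc ht hc
    have h0 : (0 : ℝ) ∈ Set.uIcc (f t) (f c) := Set.mem_uIcc.2 (Or.inl ⟨hlt.le, hfc.le⟩)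
    obtain ⟨x, hx, hx0⟩ := intermediate_value_uIcc (hf.mono hsub) h0
    exact hne x (hsub hx) hx0
  · exact h

private lemma aux_zeta_re_pos (σ₀ : ℝ) (hσ₀ : 1 < σ₀) : 0 < (riemannZeta σ₀).re := by
  have hsum : Summable (fun n : ℕ => 1 / (n : ℝ) ^ σ₀) := by
    simpa using Real.summable_one_div_nat_rpow.mpr hσ₀
  have hz : riemannZeta σ₀ = ∑' n : ℕ, 1 / (n : ℂ) ^ (σ₀ : ℂ) :=
    zeta_eq_tsum_one_div_nat_cpow (by simpa using hσ₀)
  have hterm : ∀ n : ℕ, 1 / (n : ℂ) ^ (σ₀ : ℂ) = ((1 / (n : ℝ) ^ σ₀ : ℝ) : ℂ) := by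
    intro n
    rw [show ((n : ℂ)) = (((n : ℝ) : ℂ)) by norm_cast, ← Complex.ofReal_cpow n.cast_nonneg]
    push_cast
    ring
  have hz2 : riemannZeta σ₀ = ((∑' n : ℕ, 1 / (n : ℝ) ^ σ₀ : ℝ) : ℂ) := by
    rw [hz]
    simp only [hterm]
    exact (Complex.hasSum_ofReal.mpr hsum.hasSum).tsum_eq
  rw [hz2, Complex.ofReal_re]
  refine Summable.tsum_pos hsum (fun n => by positivity) 1 ?_
  norm_num

private lemma aux_deriv_zeta_continuousAt {s : ℂ} (hs : s ≠ 1) :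
    ContinuousAt (deriv riemannZeta) s := by
  have hd : DifferentiableOn ℂ riemannZeta {(1 : ℂ)}ᶜ := fun z hz =>
    (differentiableAt_riemannZeta hz).differentiableWithinAt
  have := (hd.analyticOnNhd isOpen_compl_singleton).deriv
  exact (this s hs).continuousAt

private lemma aux_key (σ₀ h : ℝ) (hσ₀ : 1 < σ₀) (hh : 0 < h)
    (hvert : ∀ t ∈ Set.Icc (0 : ℝ) h, (riemannZeta (σ₀ + t * Complex.I)).re ≠ 0)
    (hhor : ∀ x ∈ Set.Icc (1 / 2 : ℝ) σ₀,
      riemannZeta (x + h * Complex.I) ≠ 0 ∧ (riemannZeta (x + h * Complex.I)).re ≠ 0) :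
    ((∫ t in (0 : ℝ)..h,
        Complex.I * deriv riemannZeta (σ₀ + t * Complex.I) / riemannZeta (σ₀ + t * Complex.I)) +
      ∫ x in σ₀..(1 / 2 : ℝ),
        deriv riemannZeta (x + h * Complex.I) / riemannZeta (x + h * Complex.I)).im =
      (riemannZeta (((1 / 2 : ℝ) : ℂ) + h * Complex.I)).arg -
        (riemannZeta ((σ₀ : ℂ) + (0 : ℝ) * Complex.I)).arg ∧
      0 < (riemannZeta (((1 / 2 : ℝ) : ℂ) + h * Complex.I)).re ∧
      0 < (riemannZeta ((σ₀ : ℂ) + (0 : ℝ) * Complex.I)).re := by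
  -- continuity of t ↦ Re ζ(σ₀ + t i) on [0,h]
  have hσ1 : ∀ t : ℝ, (σ₀ : ℂ) + t * Complex.I ≠ 1 := by
    intro t he
    apply_fun Complex.re at he
    simp at he
    linarith
  have hh1 : ∀ x : ℝ, (x : ℂ) + h * Complex.I ≠ 1 := by
    intro x he
    apply_fun Complex.im at he
    simp at he
    linarith
  have hcv : ContinuousOn (fun t : ℝ => (riemannZeta ((σ₀ : ℂ) + t * Complex.I)).re)
      (Set.Icc 0 h) := by
    intro t _
    refine ContinuousAt.continuousWithinAt ?_
    have hzc : ContinuousAt (fun t : ℝ => riemannZeta ((σ₀ : ℂ) + t * Complex.I)) t :=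
      ContinuousAt.comp (g := riemannZeta) (f := fun t : ℝ => (σ₀ : ℂ) + t * Complex.I)
        (differentiableAt_riemannZeta (hσ1 t)).continuousAt (by fun_prop)
    exact ContinuousAt.comp (g := Complex.re)
      (f := fun t : ℝ => riemannZeta ((σ₀ : ℂ) + t * Complex.I))
      Complex.continuous_re.continuousAt hzc
  have hch : ContinuousOn (fun x : ℝ => (riemannZeta ((x : ℂ) + h * Complex.I)).re)
      (Set.Icc (1 / 2 : ℝ) σ₀) := by
    intro x _
    refine ContinuousAt.continuousWithinAt ?_
    have hzc : ContinuousAt (fun x : ℝ => riemannZeta ((x : ℂ) + h * Complex.I)) x :=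
      ContinuousAt.comp (g := riemannZeta) (f := fun x : ℝ => (x : ℂ) + h * Complex.I)
        (differentiableAt_riemannZeta (hh1 x)).continuousAt (by fun_prop)
    exact ContinuousAt.comp (g := Complex.re)
      (f := fun x : ℝ => riemannZeta ((x : ℂ) + h * Complex.I))
      Complex.continuous_re.continuousAt hzc
  -- positivity at the start of the vertical segment
  have h00 : 0 < (riemannZeta ((σ₀ : ℂ) + (0 : ℝ) * Complex.I)).re := by
    simpa using aux_zeta_re_pos σ₀ hσ₀
  -- positivity on the vertical segment
  have hvpos : ∀ t ∈ Set.Icc (0 : ℝ) h, 0 < (riemannZeta ((σ₀ : ℂ) + t * Complex.I)).re :=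
    aux_pos_on 0 h 0 _ hcv (by simp [hh.le]) (by simpa using h00) hvert
  -- positivity on the horizontal segment (using the corner point σ₀ + ih)
  have hσmem : σ₀ ∈ Set.Icc (1 / 2 : ℝ) σ₀ := by constructor <;> linarith
  have hcorner : 0 < (riemannZeta ((σ₀ : ℂ) + h * Complex.I)).re :=
    hvpos h (by simp [hh.le])
  have hhpos : ∀ x ∈ Set.Icc (1 / 2 : ℝ) σ₀, 0 < (riemannZeta ((x : ℂ) + h * Complex.I)).re :=
    aux_pos_on _ _ σ₀ _ hch hσmem hcorner (fun x hx => (hhor x hx).2)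
  have hvne : ∀ t ∈ Set.Icc (0 : ℝ) h, riemannZeta ((σ₀ : ℂ) + t * Complex.I) ≠ 0 := by
    intro t ht hz
    exact (hvpos t ht).ne' (by rw [hz]; simp)
  -- FTC on the vertical segment
  have hvert_int : (∫ t in (0 : ℝ)..h,
      Complex.I * deriv riemannZeta (σ₀ + t * Complex.I) / riemannZeta (σ₀ + t * Complex.I)) =
      Complex.log (riemannZeta ((σ₀ : ℂ) + h * Complex.I)) -
        Complex.log (riemannZeta ((σ₀ : ℂ) + (0 : ℝ) * Complex.I)) := by
    have := intervalIntegral.integral_eq_sub_of_hasDerivAt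
      (f := fun t : ℝ => Complex.log (riemannZeta ((σ₀ : ℂ) + t * Complex.I)))
      (f' := fun t : ℝ =>
        Complex.I * deriv riemannZeta (σ₀ + t * Complex.I) / riemannZeta (σ₀ + t * Complex.I))
      (a := 0) (b := h) ?_ ?_
    · simpa using this
    · intro t ht
      rw [Set.uIcc_of_le hh.le] at ht
      set s : ℂ := (σ₀ : ℂ) + t * Complex.I with hs
      have hzs : riemannZeta s ≠ 0 := hvne t ht
      have hline : HasDerivAt (fun z : ℂ => (σ₀ : ℂ) + z * Complex.I) Complex.I (t : ℂ) := by
        simpa using ((hasDerivAt_id (t : ℂ)).mul_const Complex.I).const_add (σ₀ : ℂ)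
      have hzeta : HasDerivAt riemannZeta (deriv riemannZeta s) s :=
        (differentiableAt_riemannZeta (hσ1 t)).hasDerivAt
      have hc1 : HasDerivAt (fun z : ℂ => riemannZeta ((σ₀ : ℂ) + z * Complex.I))
          (deriv riemannZeta s * Complex.I) (t : ℂ) := by
        exact hzeta.comp (t : ℂ) hline
      have hlog : HasDerivAt Complex.log (riemannZeta s)⁻¹ (riemannZeta s) :=
        Complex.hasDerivAt_log (Or.inl (hvpos t ht))
      have hc2 : HasDerivAt (fun z : ℂ => Complex.log (riemannZeta ((σ₀ : ℂ) + z * Complex.I)))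
          ((riemannZeta s)⁻¹ * (deriv riemannZeta s * Complex.I)) (t : ℂ) :=
        by have := hlog.comp (t : ℂ) hc1; exact this
      have := hc2.comp_ofReal
      exact this.congr_deriv (by rw [hs]; ring)
    · apply ContinuousOn.intervalIntegrable
      intro t ht
      rw [Set.uIcc_of_le hh.le] at ht
      refine ContinuousAt.continuousWithinAt ?_
      have hc : ContinuousAt (fun t : ℝ => riemannZeta ((σ₀ : ℂ) + t * Complex.I)) t :=
        ContinuousAt.comp (g := riemannZeta) (f := fun t : ℝ => (σ₀ : ℂ) + t * Complex.I)
          (differentiableAt_riemannZeta (hσ1 t)).continuousAt (by fun_prop)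
      have hd : ContinuousAt (fun t : ℝ => deriv riemannZeta ((σ₀ : ℂ) + t * Complex.I)) t :=
        ContinuousAt.comp (g := deriv riemannZeta) (f := fun t : ℝ => (σ₀ : ℂ) + t * Complex.I)
          (aux_deriv_zeta_continuousAt (hσ1 t)) (by fun_prop)
      exact (continuousAt_const.mul hd).div hc (hvne t ht)
  -- FTC on the horizontal segment
  have hhor_int : (∫ x in σ₀..(1 / 2 : ℝ),
      deriv riemannZeta (x + h * Complex.I) / riemannZeta (x + h * Complex.I)) =
      Complex.log (riemannZeta (((1 / 2 : ℝ) : ℂ) + h * Complex.I)) -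
        Complex.log (riemannZeta ((σ₀ : ℂ) + h * Complex.I)) := by
    have h12 : (1 / 2 : ℝ) ≤ σ₀ := by linarith
    have := intervalIntegral.integral_eq_sub_of_hasDerivAt
      (f := fun x : ℝ => Complex.log (riemannZeta ((x : ℂ) + h * Complex.I)))
      (f' := fun x : ℝ =>
        deriv riemannZeta (x + h * Complex.I) / riemannZeta (x + h * Complex.I))
      (a := σ₀) (b := (1 / 2 : ℝ)) ?_ ?_
    · simpa using this
    · intro x hx
      rw [Set.uIcc_comm, Set.uIcc_of_le h12] at hx
      set s : ℂ := (x : ℂ) + h * Complex.I with hs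
      have hzs : riemannZeta s ≠ 0 := (hhor x hx).1
      have hline : HasDerivAt (fun z : ℂ => z + (h : ℂ) * Complex.I) 1 (x : ℂ) := by
        simpa using (hasDerivAt_id (x : ℂ)).add_const ((h : ℂ) * Complex.I)
      have hzeta : HasDerivAt riemannZeta (deriv riemannZeta s) s :=
        (differentiableAt_riemannZeta (hh1 x)).hasDerivAt
      have hc1 : HasDerivAt (fun z : ℂ => riemannZeta (z + (h : ℂ) * Complex.I))
          (deriv riemannZeta s) (x : ℂ) := by
        have := hzeta.comp (x : ℂ) hline; rwa [mul_one] at this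
      have hlog : HasDerivAt Complex.log (riemannZeta s)⁻¹ (riemannZeta s) :=
        Complex.hasDerivAt_log (Or.inl (hhpos x hx))
      have hc2 : HasDerivAt (fun z : ℂ => Complex.log (riemannZeta (z + (h : ℂ) * Complex.I)))
          ((riemannZeta s)⁻¹ * deriv riemannZeta s) (x : ℂ) :=
        by have := hlog.comp (x : ℂ) hc1; exact this
      have := hc2.comp_ofReal
      exact this.congr_deriv (by rw [hs]; ring)
    · apply ContinuousOn.intervalIntegrable
      intro x hx
      rw [Set.uIcc_comm, Set.uIcc_of_le h12] at hx
      refine ContinuousAt.continuousWithinAt ?_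
      have hc : ContinuousAt (fun x : ℝ => riemannZeta ((x : ℂ) + h * Complex.I)) x :=
        ContinuousAt.comp (g := riemannZeta) (f := fun x : ℝ => (x : ℂ) + h * Complex.I)
          (differentiableAt_riemannZeta (hh1 x)).continuousAt (by fun_prop)
      have hd : ContinuousAt (fun x : ℝ => deriv riemannZeta ((x : ℂ) + h * Complex.I)) x :=
        ContinuousAt.comp (g := deriv riemannZeta) (f := fun x : ℝ => (x : ℂ) + h * Complex.I)
          (aux_deriv_zeta_continuousAt (hh1 x)) (by fun_prop)
      exact hd.div hc ((hhor x hx).1)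
  refine ⟨?_, hhpos (1 / 2 : ℝ) (by constructor <;> linarith), h00⟩
  rw [hvert_int, hhor_int]
  simp only [Complex.add_im, Complex.sub_im, Complex.log_im]
  ring

/-- Bound for the contour `C₂`, the difference of the contours `C₁(T + δ)` and
`C₁(T - δ)`: under Backlund's nonvanishing hypotheses at both heights, the imaginary
part of `∫_{C₂} ζ′/ζ ds` is less than `π` in absolute value. -/
theorem stmt_8 (σ₀ T δ : ℝ) (hσ₀ : 1 < σ₀) (hT : 0 < T) (hδ : 0 < δ) (hδT : δ < T)
    (hvertP : ∀ t ∈ Set.Icc (0 : ℝ) (T + δ),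
      (riemannZeta (σ₀ + t * Complex.I)).re ≠ 0)
    (hvertM : ∀ t ∈ Set.Icc (0 : ℝ) (T - δ),
      (riemannZeta (σ₀ + t * Complex.I)).re ≠ 0)
    (hhorP : ∀ x ∈ Set.Icc (1 / 2 : ℝ) σ₀,
      riemannZeta (x + (T + δ) * Complex.I) ≠ 0 ∧
        (riemannZeta (x + (T + δ) * Complex.I)).re ≠ 0)
    (hhorM : ∀ x ∈ Set.Icc (1 / 2 : ℝ) σ₀,
      riemannZeta (x + (T - δ) * Complex.I) ≠ 0 ∧
        (riemannZeta (x + (T - δ) * Complex.I)).re ≠ 0) :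
    |((∫ t in (0 : ℝ)..(T + δ),
          Complex.I * deriv riemannZeta (σ₀ + t * Complex.I) /
            riemannZeta (σ₀ + t * Complex.I)) +
        ∫ x in σ₀..(1 / 2 : ℝ),
          deriv riemannZeta (x + (T + δ) * Complex.I) /
            riemannZeta (x + (T + δ) * Complex.I)).im -
      ((∫ t in (0 : ℝ)..(T - δ),
          Complex.I * deriv riemannZeta (σ₀ + t * Complex.I) /
            riemannZeta (σ₀ + t * Complex.I)) +
        ∫ x in σ₀..(1 / 2 : ℝ),
          deriv riemannZeta (x + (T - δ) * Complex.I) /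
            riemannZeta (x + (T - δ) * Complex.I)).im| < Real.pi := by
  obtain ⟨eP, hP, -⟩ := aux_key σ₀ (T + δ) hσ₀ (by linarith) hvertP
    (by intro x hx; push_cast; exact hhorP x hx)
  obtain ⟨eM, hM, -⟩ := aux_key σ₀ (T - δ) hσ₀ (by linarith) hvertM
    (by intro x hx; push_cast; exact hhorM x hx)
  push_cast at eP eM hP hM
  rw [eP, eM, sub_sub_sub_cancel_right]
  have h1 := Complex.abs_arg_lt_pi_div_two_iff.2 (Or.inl hP)
  have h2 := Complex.abs_arg_lt_pi_div_two_iff.2 (Or.inl hM)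
  exact (abs_sub _ _).trans_lt (by linarith)
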